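/- Let Q ∈ ℚ⟦X⟧ be the formal power series with constant coefficient 1 satisfying Q = 1 + X·Q³, and let g := 3·Q − Q² − 2 ∈ ℚ⟦X⟧, a series with zero constant coefficient. Let R ∈ ℚ⟦T⟧ be the formal power series with zero constant coefficient satisfying R = T + R². Then the substitution of g into R equals Q − 1 in ℚ⟦X⟧. -/

import Mathlib

open PowerSeries

/-- Substitution of the power series `f` (assumed to have zero constant coefficient)
into the power series `g`. -/
noncomputable def substInto (f g : PowerSeries ℚ) : PowerSeries ℚ :=
  PowerSeries.mk fun n =>
    PowerSeries.coeff n (Polynomial.aeval f (PowerSeries.trunc (n + 1) g))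

lemma coeff_aeval_eq_zero {f : PowerSeries ℚ} (hf : constantCoeff f = 0)
    {p : Polynomial ℚ} {n : ℕ} (hp : ∀ k ≤ n, p.coeff k = 0) :
    PowerSeries.coeff n (Polynomial.aeval f p) = 0 := by
  rw [Polynomial.aeval_def, Polynomial.eval₂_eq_sum, Polynomial.sum, map_sum]
  apply Finset.sum_eq_zero
  intro k hk
  have hkn : n < k := by
    by_contra h
    exact (Polynomial.mem_support_iff.mp hk) (hp k (le_of_not_gt h))
  have : (X : PowerSeries ℚ) ^ k ∣ f ^ k :=
    pow_dvd_pow_of_dvd (PowerSeries.X_dvd_iff.mpr hf) k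
  have h0 : PowerSeries.coeff n (f ^ k) = 0 :=
    PowerSeries.X_pow_dvd_iff.mp this n hkn
  show PowerSeries.coeff n (algebraMap ℚ (PowerSeries ℚ) (p.coeff k) * f ^ k) = 0
  have : algebraMap ℚ (PowerSeries ℚ) (p.coeff k) = PowerSeries.C (p.coeff k) := rfl
  rw [this, PowerSeries.coeff_C_mul, h0, mul_zero]

lemma coeff_substInto {f : PowerSeries ℚ} (hf : constantCoeff f = 0)
    (g : PowerSeries ℚ) {i m : ℕ} (him : i < m) :
    PowerSeries.coeff i (substInto f g)
      = PowerSeries.coeff i (Polynomial.aeval f (PowerSeries.trunc m g)) := by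
  have : PowerSeries.coeff i
      (Polynomial.aeval f (PowerSeries.trunc m g - PowerSeries.trunc (i + 1) g)) = 0 := by
    apply coeff_aeval_eq_zero hf
    intro k hk
    simp [PowerSeries.coeff_trunc, Nat.lt_succ_of_le hk, lt_of_le_of_lt hk him]
  rw [map_sub, map_sub] at this
  have h := sub_eq_zero.mp this
  simp only [substInto, PowerSeries.coeff_mk]
  exact h.symm

lemma substInto_add {f : PowerSeries ℚ} (g h : PowerSeries ℚ) :
    substInto f (g + h) = substInto f g + substInto f h := by
  ext n
  simp [substInto, map_add]

lemma substInto_one (f : PowerSeries ℚ) : substInto f 1 = 1 := by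
  ext n
  simp [substInto, PowerSeries.trunc_one]

lemma substInto_X {f : PowerSeries ℚ} (hf : constantCoeff f = 0) :
    substInto f X = f := by
  ext n
  cases n with
  | zero =>
    simp only [substInto, PowerSeries.coeff_mk]
    rw [show PowerSeries.trunc 1 (X : PowerSeries ℚ) = 0 by
      apply Polynomial.ext; intro k; simp [PowerSeries.coeff_trunc, PowerSeries.coeff_X]]
    simpa using hf.symm
  | succ n =>
    simp only [substInto, PowerSeries.coeff_mk]
    rw [PowerSeries.trunc_X_of (by omega), Polynomial.aeval_X]

lemma substInto_mul {f : PowerSeries ℚ} (hf : constantCoeff f = 0)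
    (g h : PowerSeries ℚ) :
    substInto f (g * h) = substInto f g * substInto f h := by
  ext n
  have key : PowerSeries.coeff n (Polynomial.aeval f
      (PowerSeries.trunc (n + 1) (g * h)
        - PowerSeries.trunc (n + 1) g * PowerSeries.trunc (n + 1) h)) = 0 := by
    apply coeff_aeval_eq_zero hf
    intro k hk
    have hk1 : k < n + 1 := Nat.lt_succ_of_le hk
    rw [Polynomial.coeff_sub, PowerSeries.coeff_trunc, if_pos hk1,
      ← Polynomial.coeff_coe, Polynomial.coe_mul,
      ← PowerSeries.coeff_mul_eq_coeff_trunc_mul_trunc g h hk1, sub_self]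
  rw [map_sub, map_sub, map_mul (Polynomial.aeval f)] at key
  have h1 := sub_eq_zero.mp key
  have hL : PowerSeries.coeff n (substInto f (g * h))
      = PowerSeries.coeff n
        (Polynomial.aeval f (PowerSeries.trunc (n + 1) (g * h))) := by
    simp [substInto]
  rw [hL, h1, PowerSeries.coeff_mul, PowerSeries.coeff_mul]
  apply Finset.sum_congr rfl
  intro x hx
  have hx1 : x.1 < n + 1 := Nat.lt_succ_of_le (Finset.HasAntidiagonal.antidiagonal.fst_le hx)
  have hx2 : x.2 < n + 1 := Nat.lt_succ_of_le (Finset.HasAntidiagonal.antidiagonal.snd_le hx)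
  rw [← coeff_substInto hf g hx1, ← coeff_substInto hf h hx2]

lemma substInto_neg {f : PowerSeries ℚ} (g : PowerSeries ℚ) :
    substInto f (-g) = - substInto f g := by
  have := substInto_add (f := f) g (-g)
  simp only [add_neg_cancel] at this
  have h1 : substInto f (0 : PowerSeries ℚ) = 0 := by
    ext n; simp [substInto]
  rw [h1] at this
  linear_combination -this

lemma constantCoeff_substInto {f : PowerSeries ℚ} (g : PowerSeries ℚ)
    (hg : constantCoeff g = 0) : constantCoeff (substInto f g) = 0 := by
  have : PowerSeries.trunc 1 g = 0 := by
    apply Polynomial.ext; intro k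
    simp only [PowerSeries.coeff_trunc, Polynomial.coeff_zero]
    split
    · next h => rw [Nat.lt_one_iff.mp h, PowerSeries.coeff_zero_eq_constantCoeff, hg]
    · rfl
  rw [← PowerSeries.coeff_zero_eq_constantCoeff_apply]
  simp [substInto, this]

/-- Uniqueness: if `D = u * D` with `u(0) = 0` then `D = 0`. -/
lemma eq_zero_of_self_eq_mul {u D : PowerSeries ℚ} (hu : constantCoeff u = 0)
    (h : D = u * D) : D = 0 := by
  have key : ∀ n, PowerSeries.coeff n D = 0 := by
    intro n
    induction n using Nat.strong_induction_on with
    | _ n ih =>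
      rw [show PowerSeries.coeff n D = PowerSeries.coeff n (u * D) from by rw [← h]]
      rw [PowerSeries.coeff_mul]
      apply Finset.sum_eq_zero
      intro x hx
      rcases Nat.eq_zero_or_pos x.1 with h1 | h1
      · rw [h1, PowerSeries.coeff_zero_eq_constantCoeff, hu, zero_mul]
      · have hx2 : x.2 < n := by
          have := Finset.HasAntidiagonal.mem_antidiagonal.mp hx; omega
        rw [ih x.2 hx2, mul_zero]
  ext n
  rw [key n, map_zero]

/-- Let `Q(0) = 1` with `Q = 1 + X·Q³` and `g := 3Q − Q² − 2`; let `R(0) = 0` with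
`R = T + R²`. Then substituting `g` into `R` gives `Q − 1`. -/
theorem subst_simple_quad_to_irreducible_quad
    (Q R : PowerSeries ℚ)
    (hQ0 : constantCoeff Q = 1) (hQ : Q = 1 + X * Q ^ 3)
    (hR0 : constantCoeff R = 0) (hR : R = X + R ^ 2) :
    substInto (3 * Q - Q ^ 2 - 2) R = Q - 1 := by
  have hg0 : constantCoeff (3 * Q - Q ^ 2 - 2) = 0 := by
    simp [map_sub, map_mul, map_pow, hQ0, map_ofNat]
    norm_num
  have hS0 : constantCoeff (substInto (3 * Q - Q ^ 2 - 2) R) = 0 :=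
    constantCoeff_substInto R hR0
  have hfix : substInto (3 * Q - Q ^ 2 - 2) R
      = (3 * Q - Q ^ 2 - 2) + (substInto (3 * Q - Q ^ 2 - 2) R) ^ 2 := by
    conv_lhs => rw [hR]
    rw [substInto_add, substInto_X hg0, sq R, substInto_mul hg0, ← sq]
  have hfix' : Q - 1 = (3 * Q - Q ^ 2 - 2) + (Q - 1) ^ 2 := by ring
  have hdiff : substInto (3 * Q - Q ^ 2 - 2) R - (Q - 1)
      = (substInto (3 * Q - Q ^ 2 - 2) R + (Q - 1))
        * (substInto (3 * Q - Q ^ 2 - 2) R - (Q - 1)) := by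
    calc substInto (3 * Q - Q ^ 2 - 2) R - (Q - 1)
        = ((3 * Q - Q ^ 2 - 2) + (substInto (3 * Q - Q ^ 2 - 2) R) ^ 2)
          - ((3 * Q - Q ^ 2 - 2) + (Q - 1) ^ 2) := by rw [← hfix, ← hfix']
      _ = _ := by ring
  have hu0 : constantCoeff (substInto (3 * Q - Q ^ 2 - 2) R + (Q - 1)) = 0 := by
    simp [map_add, map_sub, hS0, hQ0]
  exact sub_eq_zero.mp (eq_zero_of_self_eq_mul hu0 hdiff)
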